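/- Let d ≥ 2 be an integer and A, B ∈ ℚ[X] nonzero coprime polynomials. Let p₀, q₀ ∈ ℚ[X] be coprime nonzero polynomials and define recursively g_n(X) = gcd(A(X)·p_n(X^d), B(X)·q_n(X^d)), p_{n+1}(X) = A(X)·p_n(X^d)/g_n(X), q_{n+1}(X) = B(X)·q_n(X^d)/g_n(X). Then the sequence of degrees (deg g_n)_{n≥0} is eventually periodic. -/

import Mathlib

open Polynomial Finset

noncomputable def mlt (β : ℂ) (f : Polynomial ℚ) : ℕ :=
  rootMultiplicity β (f.map (algebraMap ℚ ℂ))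

lemma map_ne' {f : Polynomial ℚ} (hf : f ≠ 0) : f.map (algebraMap ℚ ℂ) ≠ 0 :=
  (Polynomial.map_ne_zero_iff (algebraMap ℚ ℂ).injective).mpr hf

lemma mlt_mul {f g : Polynomial ℚ} (hf : f ≠ 0) (hg : g ≠ 0) (β : ℂ) :
    mlt β (f * g) = mlt β f + mlt β g := by
  unfold mlt
  rw [Polynomial.map_mul]
  exact rootMultiplicity_mul (mul_ne_zero (map_ne' hf) (map_ne' hg))

lemma mlt_dvd_le {f g : Polynomial ℚ} (h : f ∣ g) (hg : g ≠ 0) (β : ℂ) :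
    mlt β f ≤ mlt β g := by
  unfold mlt
  rw [le_rootMultiplicity_iff (map_ne' hg)]
  exact (pow_rootMultiplicity_dvd _ _).trans (Polynomial.map_dvd _ h)

lemma mlt_eq_zero_of_not_root {f : Polynomial ℚ} {β : ℂ}
    (h : ¬ (f.map (algebraMap ℚ ℂ)).IsRoot β) : mlt β f = 0 :=
  rootMultiplicity_eq_zero h

lemma mlt_gcd {f g : Polynomial ℚ} (hf : f ≠ 0) (hg : g ≠ 0) (β : ℂ) :
    mlt β (EuclideanDomain.gcd f g) = min (mlt β f) (mlt β g) := by
  have hG : EuclideanDomain.gcd f g ≠ 0 := by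
    intro h
    exact hf (EuclideanDomain.gcd_eq_zero_iff.mp h).1
  refine le_antisymm (le_min (mlt_dvd_le (EuclideanDomain.gcd_dvd_left f g) hf β)
    (mlt_dvd_le (EuclideanDomain.gcd_dvd_right f g) hg β)) ?_
  unfold mlt
  rw [le_rootMultiplicity_iff (map_ne' hG), EuclideanDomain.gcd_eq_gcd_ab f g]
  rw [Polynomial.map_add, Polynomial.map_mul, Polynomial.map_mul]
  refine dvd_add (Dvd.dvd.mul_right ?_ _) (Dvd.dvd.mul_right ?_ _)
  · exact (pow_dvd_pow _ (min_le_left _ _)).trans (pow_rootMultiplicity_dvd _ _)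
  · exact (pow_dvd_pow _ (min_le_right _ _)).trans (pow_rootMultiplicity_dvd _ _)

lemma mlt_coprime {f g : Polynomial ℚ} (h : IsCoprime f g) (β : ℂ) :
    mlt β f = 0 ∨ mlt β g = 0 := by
  by_contra hc
  push_neg at hc
  obtain ⟨u, v, huv⟩ := h.map (Polynomial.mapRingHom (algebraMap ℚ ℂ))
  have h1 : (X - C β) ∣ (1 : Polynomial ℂ) := by
    rw [← huv]
    have df : (X - C β) ∣ f.map (algebraMap ℚ ℂ) := by
      have := pow_rootMultiplicity_dvd (f.map (algebraMap ℚ ℂ)) β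
      exact (dvd_pow_self _ (by omega : mlt β f ≠ 0)).trans this
    have dg : (X - C β) ∣ g.map (algebraMap ℚ ℂ) := by
      have := pow_rootMultiplicity_dvd (g.map (algebraMap ℚ ℂ)) β
      exact (dvd_pow_self _ (by omega : mlt β g ≠ 0)).trans this
    exact dvd_add ((df.mul_left _)) ((dg.mul_left _))
  have := Polynomial.eval_dvd (x := β) h1
  simp at this

lemma rootMultiplicity_pow' {Q : Polynomial ℂ} (hQ : Q ≠ 0) (β : ℂ) (m : ℕ) :
    rootMultiplicity β (Q ^ m) = m * rootMultiplicity β Q := by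
  induction m with
  | zero => simp [rootMultiplicity_eq_zero (by simp : ¬ (1 : Polynomial ℂ).IsRoot β)]
  | succ k ih =>
    rw [pow_succ, rootMultiplicity_mul (mul_ne_zero (pow_ne_zero _ hQ) hQ), ih]
    ring

lemma rootMultiplicity_comp_X_pow {P : Polynomial ℂ} (hP : P ≠ 0) {d : ℕ} (hd : 1 ≤ d) (β : ℂ) :
    rootMultiplicity β (P.comp (X ^ d)) =
      (if β = 0 then d * rootMultiplicity 0 P else rootMultiplicity (β ^ d) P) := by
  set c : ℂ := β ^ d with hc
  set m : ℕ := rootMultiplicity c P with hm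
  set T : Polynomial ℂ := P /ₘ (X - C c) ^ m with hT
  have hdecomp : (X - C c) ^ m * T = P := pow_mul_divByMonic_rootMultiplicity_eq P c
  have hTc : T.eval c ≠ 0 := eval_divByMonic_pow_rootMultiplicity_ne_zero c hP
  have hT0 : T ≠ 0 := fun h => hTc (by simp [h])
  have hXd : (X ^ d - C c : Polynomial ℂ) ≠ 0 := by
    intro h
    have := congrArg natDegree h
    rw [natDegree_X_pow_sub_C] at this
    simp at this; omega
  have hTcomp : T.comp (X ^ d) ≠ 0 := by
    intro h
    have : (T.comp (X ^ d)).eval β = 0 := by rw [h]; simp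
    rw [eval_comp] at this
    simp [← hc] at this
    exact hTc this
  have hcomp : P.comp (X ^ d) = (X ^ d - C c) ^ m * T.comp (X ^ d) := by
    rw [← hdecomp, mul_comp, pow_comp, sub_comp, X_comp, C_comp]
  rw [hcomp, rootMultiplicity_mul (mul_ne_zero (pow_ne_zero _ hXd) hTcomp),
    rootMultiplicity_pow' hXd]
  have hTzero : rootMultiplicity β (T.comp (X ^ d)) = 0 := by
    apply rootMultiplicity_eq_zero
    intro h
    rw [IsRoot, eval_comp] at h
    simp [← hc] at h
    exact hTc h
  rw [hTzero, add_zero]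
  by_cases hβ : β = 0
  · subst hβ
    simp only [if_pos rfl]
    have : c = 0 := by simp [hc, zero_pow (by omega : d ≠ 0)]
    rw [this] at *
    have : (X ^ d - C (0:ℂ)) = X ^ d := by simp
    rw [this]
    have : rootMultiplicity (0:ℂ) ((X:Polynomial ℂ) ^ d) = d := by
      rw [rootMultiplicity_eq_natTrailingDegree']
      simp
    rw [this]
    simp only [if_true, eq_self_iff_true]
    rw [hm, hc, zero_pow (by omega : d ≠ 0)]
    ring
  · rw [if_neg hβ]
    have hc0 : c ≠ 0 := pow_ne_zero _ hβ
    have hsep : Separable ((X:Polynomial ℂ) ^ d - C c) :=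
      separable_X_pow_sub_C c (by exact_mod_cast Nat.cast_ne_zero.mpr (by omega)) hc0
    have h1 : rootMultiplicity β ((X:Polynomial ℂ) ^ d - C c) ≤ 1 :=
      rootMultiplicity_le_one_of_separable hsep β
    have h2 : 1 ≤ rootMultiplicity β ((X:Polynomial ℂ) ^ d - C c) := by
      rw [Nat.one_le_iff_ne_zero]
      intro h
      have : ¬ IsRoot (X ^ d - C c) β := by
        rw [← rootMultiplicity_pos hXd]
        omega
      apply this
      simp [IsRoot, hc]
    have hone : rootMultiplicity β ((X:Polynomial ℂ) ^ d - C c) = 1 := le_antisymm h1 h2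
    rw [hone, mul_one]

private lemma anti_stab : ∀ (N : ℕ) (f : ℕ → ℕ), (∀ m n, m ≤ n → f n ≤ f m) → f 0 ≤ N →
    ∃ J, ∀ n, J ≤ n → f n = f J := by
  intro N
  induction N with
  | zero =>
    intro f hf h0
    exact ⟨0, fun n hn => by have := hf 0 n (Nat.zero_le _); omega⟩
  | succ N ih =>
    intro f hf h0
    by_cases hall : ∀ n, f n = f 0
    · exact ⟨0, fun n _ => (hall n).trans (hall 0).symm⟩
    · push_neg at hall
      obtain ⟨m, hm⟩ := hall
      have hlt : f m < f 0 := lt_of_le_of_ne (hf 0 m (Nat.zero_le _)) hm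
      obtain ⟨J, hJ⟩ := ih (fun k => f (m + k)) (fun a b hab => hf _ _ (by omega)) (by show f (m + 0) ≤ N; rw [Nat.add_zero]; omega)
      refine ⟨m + J, fun n hn => ?_⟩
      have h1 := hJ (n - m) (by omega)
      rw [show m + (n - m) = n by omega] at h1
      exact h1

/-- A monotone-or-antitone bounded sequence of naturals stabilizes. -/
lemma stab (f : ℕ → ℕ) (C : ℕ) (hb : ∀ n, f n ≤ C) (hm : Monotone f ∨ Antitone f) :
    ∃ J, ∀ n, J ≤ n → f n = f J := by
  rcases hm with hm | hm
  · obtain ⟨J, hJ⟩ := anti_stab C (fun n => C - f n)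
      (fun a b hab => by show C - f b ≤ C - f a; have := hm hab; omega)
      (by show C - f 0 ≤ C; omega)
    refine ⟨J, fun n hn => ?_⟩
    have := hJ n hn
    have h1 := hb n; have h2 := hb J
    omega
  · exact anti_stab C f (fun a b hab => hm hab) (hb 0)

/-- residue-class stabilization gives eventual periodicity. -/
lemma evp_of_residue (F : ℕ → ℕ) (K P : ℕ) (hP : 0 < P)
    (h : ∀ r, r < P → ∃ J, ∀ j, J ≤ j → F (K + r + j * P) = F (K + r + J * P)) :
    ∃ K', ∀ n, K' ≤ n → F (n + P) = F n := by
  choose! J hJ using h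
  set Jmax := (Finset.range P).sup J with hJmax
  refine ⟨K + P * (Jmax + 1), fun n hn => ?_⟩
  set r := (n - K) % P with hr
  set j := (n - K) / P with hj
  have hrP : r < P := Nat.mod_lt _ hP
  have hkey : P * j + r = n - K := Nat.div_add_mod _ _
  have hjge : Jmax + 1 ≤ j := by
    rw [hj, Nat.le_div_iff_mul_le hP, Nat.mul_comm]
    omega
  have hJr : J r ≤ j := le_trans (le_trans (Finset.le_sup (Finset.mem_range.mpr hrP)) (Nat.le_succ _)) hjge
  have e1 : K + r + j * P = n := by
    have : j * P = P * j := Nat.mul_comm _ _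
    omega
  have e2 : K + r + (j + 1) * P = n + P := by
    have h1 : (j+1) * P = j * P + P := by ring
    have : j * P = P * j := Nat.mul_comm _ _
    omega
  calc F (n + P) = F (K + r + (j+1) * P) := by rw [e2]
    _ = F (K + r + (J r) * P) := hJ r hrP (j+1) (by omega)
    _ = F (K + r + j * P) := (hJ r hrP j hJr).symm
    _ = F n := by rw [e1]

/-- extending period to multiples -/
lemma evp_mul (F : ℕ → ℕ) (K P : ℕ) (h : ∀ n, K ≤ n → F (n + P) = F n) :
    ∀ t n, K ≤ n → F (n + P * t) = F n := by
  intro t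
  induction t with
  | zero => simp
  | succ s ih =>
    intro n hn
    have : n + P * (s + 1) = (n + P * s) + P := by ring
    rw [this, h _ (by omega), ih n hn]

/-- eventual periodicity of h ∘ Z for quasi-affine Z and monotone/antitone bounded h -/
lemma evp_affine (Z : ℕ → ℤ) (h : ℤ → ℕ) (C : ℕ) (hb : ∀ z, h z ≤ C)
    (hm : Monotone h ∨ Antitone h) (K P : ℕ) (hP : 0 < P) (Δ : ℤ)
    (hq : ∀ n, K ≤ n → Z (n + P) = Z n + Δ) :
    ∃ K', ∀ n, K' ≤ n → h (Z (n + P)) = h (Z n) := by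
  apply evp_of_residue (fun n => h (Z n)) K P hP
  intro r hr
  have hstep : ∀ j, Z (K + r + (j + 1) * P) = Z (K + r + j * P) + Δ := by
    intro j
    have := hq (K + r + j * P) (by omega)
    rw [show K + r + j * P + P = K + r + (j + 1) * P by ring] at this
    exact this
  have hZmono : Monotone (fun j => Z (K + r + j * P)) ∨ Antitone (fun j => Z (K + r + j * P)) := by
    rcases le_total 0 Δ with hΔ | hΔ
    · left
      apply monotone_nat_of_le_succ
      intro j
      show Z (K + r + j * P) ≤ Z (K + r + (j+1) * P)
      rw [hstep j]; omega
    · right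
      apply antitone_nat_of_succ_le
      intro j
      show Z (K + r + (j+1) * P) ≤ Z (K + r + j * P)
      rw [hstep j]; omega
  have hFm : Monotone (fun j => h (Z (K + r + j * P))) ∨
      Antitone (fun j => h (Z (K + r + j * P))) := by
    rcases hm with hm | hm <;> rcases hZmono with hz | hz
    · exact Or.inl (fun a b hab => hm (hz hab))
    · exact Or.inr (fun a b hab => hm (hz hab))
    · exact Or.inr (fun a b hab => hm (hz hab))
    · exact Or.inl (fun a b hab => hm (hz hab))
  obtain ⟨J, hJ⟩ := stab (fun j => h (Z (K + r + j * P))) C (fun j => hb _) hFm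
  exact ⟨J, fun j hj => hJ j hj⟩

/-- sum over a finset of eventually periodic sequences is eventually periodic -/
lemma evp_sum {α : Type*} [DecidableEq α] (R : Finset α) (W : ℕ → α → ℕ)
    (h : ∀ β ∈ R, ∃ K P, 0 < P ∧ ∀ n, K ≤ n → W (n + P) β = W n β) :
    ∃ K P, 0 < P ∧ ∀ n, K ≤ n → (∑ β ∈ R, W (n + P) β) = ∑ β ∈ R, W n β := by
  induction R using Finset.induction with
  | empty => exact ⟨0, 1, Nat.one_pos, fun n _ => by simp⟩
  | insert β R' hnotmem ih =>
    obtain ⟨K1, P1, hP1, h1⟩ := h β (Finset.mem_insert_self _ _)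
    obtain ⟨K2, P2, hP2, h2⟩ := ih (fun γ hγ => h γ (Finset.mem_insert_of_mem hγ))
    refine ⟨max K1 K2, P1 * P2, Nat.mul_pos hP1 hP2, fun n hn => ?_⟩
    rw [Finset.sum_insert hnotmem, Finset.sum_insert hnotmem]
    have e1 : W (n + P1 * P2) β = W n β := by
      have := evp_mul (fun m => W m β) K1 P1 h1 P2 n (by omega)
      simpa using this
    have e2 : (∑ γ ∈ R', W (n + P1 * P2) γ) = ∑ γ ∈ R', W n γ := by
      have := evp_mul (fun m => ∑ γ ∈ R', W m γ) K2 P2 h2 P1 n (by omega)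
      rw [show P2 * P1 = P1 * P2 by ring] at this
      simpa using this
    rw [e1, e2]

lemma comp_X_pow_ne_zero {f : Polynomial ℚ} (hf : f ≠ 0) {d : ℕ} (hd : 1 ≤ d) :
    f.comp (X ^ d) ≠ 0 := by
  intro h
  have hq : natDegree ((X : Polynomial ℚ) ^ d) ≠ 0 := by
    rw [natDegree_X_pow]; omega
  have := leadingCoeff_comp (p := f) hq
  rw [h] at this
  simp only [leadingCoeff_zero] at this
  have h1 : f.leadingCoeff ≠ 0 := leadingCoeff_ne_zero.mpr hf
  have h2 : ((X : Polynomial ℚ) ^ d).leadingCoeff = 1 := by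
    simp [leadingCoeff_X_pow]
  rw [h2, one_pow, mul_one] at this
  exact h1 this.symm

lemma step_facts {d : ℕ} (hd : 1 ≤ d) {A B pk qk gk pk1 qk1 : Polynomial ℚ}
    (hA : A ≠ 0) (hB : B ≠ 0) (hpk : pk ≠ 0) (hqk : qk ≠ 0)
    (hgk : gk = EuclideanDomain.gcd (A * pk.comp (X ^ d)) (B * qk.comp (X ^ d)))
    (hp1 : pk1 = A * pk.comp (X ^ d) / gk) (hq1 : qk1 = B * qk.comp (X ^ d) / gk) :
    gk ≠ 0 ∧ pk1 ≠ 0 ∧ qk1 ≠ 0 ∧ IsCoprime pk1 qk1 ∧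
      gk * pk1 = A * pk.comp (X ^ d) ∧ gk * qk1 = B * qk.comp (X ^ d) := by
  set F := A * pk.comp (X ^ d) with hF'
  set G := B * qk.comp (X ^ d) with hG'
  have hF : F ≠ 0 := mul_ne_zero hA (comp_X_pow_ne_zero hpk hd)
  have hG : G ≠ 0 := mul_ne_zero hB (comp_X_pow_ne_zero hqk hd)
  have hgk0 : gk ≠ 0 := by
    rw [hgk]
    intro hh
    exact hF (EuclideanDomain.gcd_eq_zero_iff.mp hh).1
  have hdF : gk ∣ F := hgk ▸ EuclideanDomain.gcd_dvd_left F G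
  have hdG : gk ∣ G := hgk ▸ EuclideanDomain.gcd_dvd_right F G
  have hpk1 : gk * pk1 = F := by rw [hp1]; exact EuclideanDomain.mul_div_cancel' hgk0 hdF
  have hqk1 : gk * qk1 = G := by rw [hq1]; exact EuclideanDomain.mul_div_cancel' hgk0 hdG
  have hp' : pk1 ≠ 0 := by
    intro hh; rw [hh, mul_zero] at hpk1; exact hF hpk1.symm
  have hq' : qk1 ≠ 0 := by
    intro hh; rw [hh, mul_zero] at hqk1; exact hG hqk1.symm
  set u := EuclideanDomain.gcdA F G with hu
  set v := EuclideanDomain.gcdB F G with hv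
  have hbez : gk = F * u + G * v := by rw [hgk]; exact EuclideanDomain.gcd_eq_gcd_ab F G
  rw [← hpk1, ← hqk1] at hbez
  have hcan : gk * 1 = gk * (u * pk1 + v * qk1) := by
    rw [mul_one]
    nth_rewrite 1 [hbez]
    ring
  have hone : u * pk1 + v * qk1 = 1 := (mul_left_cancel₀ hgk0 hcan).symm
  exact ⟨hgk0, hp', hq', ⟨_, _, hone⟩, hpk1, hqk1⟩

/-- **Proposition 2.** Let `d ≥ 2` and `A, B ∈ ℚ[X]` nonzero coprime. Let `p₀, q₀ ∈ ℚ[X]` be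
coprime nonzero polynomials, and recursively set
`g_n = gcd(A(X)·p_n(X^d), B(X)·q_n(X^d))`, `p_{n+1} = A(X)·p_n(X^d)/g_n`,
`q_{n+1} = B(X)·q_n(X^d)/g_n`. Then the sequence of degrees `(deg g_n)` is
eventually periodic. -/
theorem statement12
    (d : ℕ) (hd : 2 ≤ d)
    (A B : Polynomial ℚ) (hA : A ≠ 0) (hB : B ≠ 0) (hAB : IsCoprime A B)
    (p q g : ℕ → Polynomial ℚ)
    (hp0 : p 0 ≠ 0) (hq0 : q 0 ≠ 0) (hpq : IsCoprime (p 0) (q 0))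
    (hg : ∀ n, g n = EuclideanDomain.gcd (A * (p n).comp (Polynomial.X ^ d))
                       (B * (q n).comp (Polynomial.X ^ d)))
    (hp : ∀ n, p (n + 1) = A * (p n).comp (Polynomial.X ^ d) / g n)
    (hq : ∀ n, q (n + 1) = B * (q n).comp (Polynomial.X ^ d) / g n) :
    ∃ n₀ P : ℕ, 0 < P ∧ ∀ n ≥ n₀, (g (n + P)).natDegree = (g n).natDegree := by
  have hd1 : 1 ≤ d := by omega
  have basics : ∀ n, p n ≠ 0 ∧ q n ≠ 0 ∧ IsCoprime (p n) (q n) := by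
    intro n
    induction n with
    | zero => exact ⟨hp0, hq0, hpq⟩
    | succ k ih =>
      obtain ⟨h1, h2, h3⟩ := ih
      obtain ⟨_, h4, h5, h6, _, _⟩ := step_facts hd1 hA hB h1 h2 (hg k) (hp k) (hq k)
      exact ⟨h4, h5, h6⟩
  have facts : ∀ n, g n ≠ 0 ∧ g n * p (n+1) = A * (p n).comp (X ^ d) ∧
      g n * q (n+1) = B * (q n).comp (X ^ d) := by
    intro n
    obtain ⟨h1, h2, h3⟩ := basics n
    obtain ⟨h4, _, _, _, h5, h6⟩ := step_facts hd1 hA hB h1 h2 (hg n) (hp n) (hq n)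
    exact ⟨h4, h5, h6⟩
  set z : ℕ → ℂ → ℤ := fun n β => (mlt β (p n) : ℤ) - (mlt β (q n) : ℤ) with hzdef
  set cA : ℂ → ℤ := fun β => (mlt β A : ℤ) - (mlt β B : ℤ) with hcdef
  set MDp : ℕ → ℂ → ℕ := fun n β => if β = 0 then d * mlt 0 (p n) else mlt (β ^ d) (p n) with hMDp
  set MDq : ℕ → ℂ → ℕ := fun n β => if β = 0 then d * mlt 0 (q n) else mlt (β ^ d) (q n) with hMDq
  have hcomp' : ∀ (f : Polynomial ℚ), f ≠ 0 → ∀ β : ℂ,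
      mlt β (f.comp (X ^ d)) = if β = 0 then d * mlt 0 f else mlt (β ^ d) f := by
    intro f hf β
    unfold mlt
    rw [Polynomial.map_comp, Polynomial.map_pow, map_X]
    exact rootMultiplicity_comp_X_pow (map_ne' hf) hd1 β
  have hmg : ∀ n β, mlt β (g n) = min (mlt β A + MDp n β) (mlt β B + MDq n β) := by
    intro n β
    obtain ⟨h1, h2, h3⟩ := basics n
    rw [hg n,
      mlt_gcd (mul_ne_zero hA (comp_X_pow_ne_zero h1 hd1))
        (mul_ne_zero hB (comp_X_pow_ne_zero h2 hd1)) β,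
      mlt_mul hA (comp_X_pow_ne_zero h1 hd1) β,
      mlt_mul hB (comp_X_pow_ne_zero h2 hd1) β,
      hcomp' _ h1 β, hcomp' _ h2 β]
  have hMD0 : ∀ n β, MDp n β = 0 ∨ MDq n β = 0 := by
    intro n β
    obtain ⟨h1, h2, h3⟩ := basics n
    simp only [hMDp, hMDq]
    by_cases hβ : β = 0
    · simp only [hβ, if_pos]
      rcases mlt_coprime h3 0 with h | h
      · left; rw [h, mul_zero]
      · right; rw [h, mul_zero]
    · simp only [if_neg hβ]
      exact mlt_coprime h3 (β ^ d)
  have hzMD : ∀ n β, (if β = 0 then (d : ℤ) * z n 0 else z n (β ^ d)) =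
      (MDp n β : ℤ) - (MDq n β : ℤ) := by
    intro n β
    by_cases hβ : β = 0
    · simp only [hβ, if_pos, hzdef, hMDp, hMDq]
      push_cast
      ring
    · simp only [if_neg hβ, hzdef, hMDp, hMDq]
  have hzrec : ∀ n (β : ℂ), β ≠ 0 → z (n+1) β = z n (β ^ d) + cA β := by
    intro n β hβ
    obtain ⟨hg0, hP, hQ⟩ := facts n
    obtain ⟨h1, h2, _⟩ := basics n
    obtain ⟨h1', h2', _⟩ := basics (n+1)
    have e1 : mlt β (g n) + mlt β (p (n+1)) = mlt β A + mlt (β ^ d) (p n) := by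
      rw [← mlt_mul hg0 h1' β, hP, mlt_mul hA (comp_X_pow_ne_zero h1 hd1) β,
        hcomp' _ h1 β, if_neg hβ]
    have e2 : mlt β (g n) + mlt β (q (n+1)) = mlt β B + mlt (β ^ d) (q n) := by
      rw [← mlt_mul hg0 h2' β, hQ, mlt_mul hB (comp_X_pow_ne_zero h2 hd1) β,
        hcomp' _ h2 β, if_neg hβ]
    simp only [hzdef, hcdef]
    omega
  have hzrec0 : ∀ n, z (n+1) 0 = (d : ℤ) * z n 0 + cA 0 := by
    intro n
    obtain ⟨hg0, hP, hQ⟩ := facts n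
    obtain ⟨h1, h2, _⟩ := basics n
    obtain ⟨h1', h2', _⟩ := basics (n+1)
    have e1 : mlt 0 (g n) + mlt 0 (p (n+1)) = mlt 0 A + d * mlt 0 (p n) := by
      rw [← mlt_mul hg0 h1' 0, hP, mlt_mul hA (comp_X_pow_ne_zero h1 hd1) 0,
        hcomp' _ h1 0, if_pos rfl]
    have e2 : mlt 0 (g n) + mlt 0 (q (n+1)) = mlt 0 B + d * mlt 0 (q n) := by
      rw [← mlt_mul hg0 h2' 0, hQ, mlt_mul hB (comp_X_pow_ne_zero h2 hd1) 0,
        hcomp' _ h2 0, if_pos rfl]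
    have e1' := congrArg (Nat.cast : ℕ → ℤ) e1
    have e2' := congrArg (Nat.cast : ℕ → ℤ) e2
    push_cast at e1' e2'
    simp only [hzdef, hcdef]
    linear_combination e1' - e2'
  have hunroll : ∀ n (δ : ℂ), δ ≠ 0 →
      z n δ = z 0 (δ ^ (d ^ n)) + ∑ k ∈ Finset.range n, cA (δ ^ (d ^ k)) := by
    intro n
    induction n with
    | zero => intro δ hδ; simp
    | succ m ih =>
      intro δ hδ
      have hδd : δ ^ d ≠ 0 := pow_ne_zero _ hδ
      rw [hzrec m δ hδ, ih (δ ^ d) hδd]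
      have hpow : ∀ k : ℕ, (δ ^ d) ^ (d ^ k) = δ ^ (d ^ (k+1)) := by
        intro k
        rw [← pow_mul, pow_succ']
      rw [hpow m, Finset.sum_range_succ' (fun k => cA (δ ^ (d ^ k))) m]
      have hc : ∀ k ∈ Finset.range m, cA ((δ ^ d) ^ (d ^ k)) = cA (δ ^ (d ^ (k+1))) :=
        fun k _ => by rw [hpow k]
      rw [Finset.sum_congr rfl hc]
      simp only [pow_zero, pow_one]
      ring
  have perbeta : ∀ β : ℂ, ∃ K P : ℕ, 0 < P ∧ ∀ n, K ≤ n →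
      mlt β (g (n + P)) = mlt β (g n) := by
    intro β
    have hab : mlt β A = 0 ∨ mlt β B = 0 := mlt_coprime hAB β
    set a := mlt β A with ha
    set b := mlt β B with hb'
    set hfun : ℤ → ℕ := fun t => min a (Int.toNat (-t)) + min b (Int.toNat t) with hfdef
    have hbound : ∀ t, hfun t ≤ a + b := fun t => by simp only [hfdef]; omega
    have hmono : Monotone hfun ∨ Antitone hfun := by
      rcases hab with h0 | h0
      · left; intro s t hst; simp only [hfdef, h0]; omega
      · right; intro s t hst; simp only [hfdef, h0]; omega
    set Z : ℕ → ℤ := fun n => if β = 0 then (d : ℤ) * z n 0 else z n (β ^ d) with hZdef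
    have hgZ : ∀ n, mlt β (g n) = hfun (Z n) := by
      intro n
      have h1 := hmg n β
      have h2 := hMD0 n β
      have h3 := hzMD n β
      simp only [hfdef, hZdef]
      rw [h1]
      omega
    by_cases hβ0 : β = 0
    · have hmonoZ : Monotone (fun n => z n 0) ∨ Antitone (fun n => z n 0) := by
        rcases le_total (z 0 0) (z 1 0) with hle | hle
        · left
          apply monotone_nat_of_le_succ
          intro n
          induction n with
          | zero => exact hle
          | succ m ihm =>
            have h1 := hzrec0 (m+1)
            have h2 := hzrec0 m
            have h3 : (d : ℤ) * z m 0 ≤ (d : ℤ) * z (m+1) 0 :=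
              mul_le_mul_of_nonneg_left ihm (by positivity)
            linarith
        · right
          apply antitone_nat_of_succ_le
          intro n
          induction n with
          | zero => exact hle
          | succ m ihm =>
            have h1 := hzrec0 (m+1)
            have h2 := hzrec0 m
            have h3 : (d : ℤ) * z (m+1) 0 ≤ (d : ℤ) * z m 0 :=
              mul_le_mul_of_nonneg_left ihm (by positivity)
            linarith
      have hZm : Monotone Z ∨ Antitone Z := by
        rcases hmonoZ with hm | hm
        · left
          intro s t hst
          simp only [hZdef, if_pos hβ0]
          exact mul_le_mul_of_nonneg_left (hm hst) (by positivity)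
        · right
          intro s t hst
          simp only [hZdef, if_pos hβ0]
          exact mul_le_mul_of_nonneg_left (hm hst) (by positivity)
      have hFm : Monotone (fun n => hfun (Z n)) ∨ Antitone (fun n => hfun (Z n)) := by
        rcases hmono with hm | hm <;> rcases hZm with hz | hz
        · exact Or.inl fun s t hst => hm (hz hst)
        · exact Or.inr fun s t hst => hm (hz hst)
        · exact Or.inr fun s t hst => hm (hz hst)
        · exact Or.inl fun s t hst => hm (hz hst)
      obtain ⟨J, hJ⟩ := stab (fun n => hfun (Z n)) (a + b) (fun n => hbound _) hFm
      refine ⟨J, 1, Nat.one_pos, fun n hn => ?_⟩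
      rw [hgZ, hgZ, hJ (n+1) (by omega), hJ n hn]
    · set γ := β ^ d with hγ
      have hγ0 : γ ≠ 0 := pow_ne_zero _ hβ0
      set u : ℕ → ℂ := fun k => γ ^ (d ^ k) with hu
      have hu0 : ∀ k, u k ≠ 0 := fun k => pow_ne_zero _ hγ0
      have hushift : ∀ k m, u (k + m) = (u k) ^ (d ^ m) := by
        intro k m
        have hdd : d ^ (k + m) = d ^ k * d ^ m := pow_add d k m
        calc u (k + m) = γ ^ (d ^ (k + m)) := rfl
          _ = γ ^ (d ^ k * d ^ m) := by rw [hdd]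
          _ = (γ ^ (d ^ k)) ^ (d ^ m) := pow_mul γ _ _
          _ = (u k) ^ (d ^ m) := rfl
      have hZeq : ∀ n, Z n = z n γ := fun n => by simp only [hZdef, if_neg hβ0]
      have hquasi : ∃ K P : ℕ, 0 < P ∧ ∃ Δ : ℤ, ∀ n, K ≤ n → z (n + P) γ = z n γ + Δ := by
        by_cases hcol : ∃ i j, i < j ∧ u i = u j
        · obtain ⟨i, j, hij, huij⟩ := hcol
          set P := j - i with hP'
          have hPpos : 0 < P := by omega
          have hper : ∀ n, i ≤ n → u (n + P) = u n := by
            intro n hn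
            calc u (n + P) = u (j + (n - i)) := by congr 1; omega
              _ = (u j) ^ (d ^ (n - i)) := hushift j (n - i)
              _ = (u i) ^ (d ^ (n - i)) := by rw [huij]
              _ = u (i + (n - i)) := (hushift i (n - i)).symm
              _ = u n := by congr 1; omega
          refine ⟨i, P, hPpos, ∑ k ∈ Finset.Ico i (i + P), cA (u k), ?_⟩
          have hwin : ∀ m, (∑ k ∈ Finset.Ico (i+m) (i+m+P), cA (u k)) =
              ∑ k ∈ Finset.Ico i (i+P), cA (u k) := by
            intro m
            induction m with
            | zero => simp
            | succ s ihs =>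
              set t := i + s with ht
              have hA1 : (∑ k ∈ Finset.Ico t (t+P+1), cA (u k)) =
                  (∑ k ∈ Finset.Ico t (t+P), cA (u k)) + cA (u (t+P)) :=
                Finset.sum_Ico_succ_top (by omega) _
              have hA2 : (∑ k ∈ Finset.Ico t (t+P+1), cA (u k)) =
                  cA (u t) + ∑ k ∈ Finset.Ico (t+1) (t+P+1), cA (u k) :=
                Finset.sum_eq_sum_Ico_succ_bot (by omega) _
              have hut : u (t + P) = u t := hper t (by omega)
              have hkey : (∑ k ∈ Finset.Ico (t+1) (t+1+P), cA (u k)) =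
                  ∑ k ∈ Finset.Ico t (t+P), cA (u k) := by
                rw [show t+1+P = t+P+1 by ring]
                rw [hut] at hA1
                omega
              rw [show i + (s+1) = t + 1 by omega, show t+1+P = t+1+P by rfl, hkey]
              rw [← ihs]
          intro n hn
          rw [hunroll (n+P) γ hγ0, hunroll n γ hγ0]
          have hroots : z 0 (γ ^ (d ^ (n+P))) = z 0 (γ ^ (d ^ n)) := by
            have := hper n hn
            simp only [hu] at this
            rw [this]
          have hsplit : (∑ k ∈ Finset.range (n+P), cA (γ ^ (d ^ k))) =
              (∑ k ∈ Finset.range n, cA (γ ^ (d ^ k))) +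
              ∑ k ∈ Finset.Ico n (n+P), cA (γ ^ (d ^ k)) := by
            rw [Finset.range_eq_Ico, Finset.range_eq_Ico]
            exact (Finset.sum_Ico_consecutive (fun k => cA (γ ^ (d ^ k))) (Nat.zero_le n) (by omega : n ≤ n + P)).symm
          have hwn : (∑ k ∈ Finset.Ico n (n+P), cA (γ ^ (d ^ k))) =
              ∑ k ∈ Finset.Ico i (i+P), cA (u k) := by
            have := hwin (n - i)
            rw [show i + (n-i) = n by omega] at this
            simp only [hu] at this ⊢
            exact this
          rw [hroots, hsplit, hwn]
          ring
        · push_neg at hcol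
          have hinj : Function.Injective u := by
            intro i j hij
            by_contra hne
            rcases Nat.lt_trichotomy i j with h | h | h
            · exact hcol i j h hij
            · exact hne h
            · exact hcol j i h hij.symm
          set prod := A * B * p 0 * q 0 with hprod
          have hprod0 : prod ≠ 0 := mul_ne_zero (mul_ne_zero (mul_ne_zero hA hB) hp0) hq0
          have hfin : (u ⁻¹' (((prod.map (algebraMap ℚ ℂ)).roots.toFinset : Finset ℂ) : Set ℂ)).Finite :=
            Set.Finite.preimage hinj.injOn (Set.toFinite _)
          obtain ⟨K0, hK0⟩ := hfin.bddAbove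
          have hvanish : ∀ k, K0 + 1 ≤ k → cA (u k) = 0 ∧ z 0 (u k) = 0 := by
            intro k hk
            have hnotmem : u k ∉ (prod.map (algebraMap ℚ ℂ)).roots.toFinset := by
              intro hmem
              have hkmem : k ∈ u ⁻¹' (((prod.map (algebraMap ℚ ℂ)).roots.toFinset : Finset ℂ) : Set ℂ) := by
                simp only [Set.mem_preimage, Finset.mem_coe]
                exact hmem
              have := hK0 hkmem
              omega
            have hm0 : mlt (u k) prod = 0 := by
              unfold mlt
              apply rootMultiplicity_eq_zero
              intro hroot
              exact hnotmem (Multiset.mem_toFinset.mpr ((mem_roots (map_ne' hprod0)).mpr hroot))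
            have hdvd : ∀ f : Polynomial ℚ, f ∣ prod → mlt (u k) f = 0 := by
              intro f hdv
              have := mlt_dvd_le hdv hprod0 (u k)
              omega
            have hA0 : mlt (u k) A = 0 := hdvd A ⟨B * p 0 * q 0, by rw [hprod]; ring⟩
            have hB0 : mlt (u k) B = 0 := hdvd B ⟨A * p 0 * q 0, by rw [hprod]; ring⟩
            have hp00 : mlt (u k) (p 0) = 0 := hdvd (p 0) ⟨A * B * q 0, by rw [hprod]; ring⟩
            have hq00 : mlt (u k) (q 0) = 0 := hdvd (q 0) ⟨A * B * p 0, by rw [hprod]; ring⟩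
            constructor
            · simp only [hcdef, hA0, hB0]; ring
            · simp only [hzdef, hp00, hq00]; ring
          have hconst : ∀ n, K0 + 1 ≤ n → z n γ = z (K0+1) γ := by
            intro n hn
            rw [hunroll n γ hγ0, hunroll (K0+1) γ hγ0]
            have h1 : z 0 (γ ^ d ^ n) = 0 := by
              have := (hvanish n hn).2
              simp only [hu] at this
              exact this
            have h2 : z 0 (γ ^ d ^ (K0+1)) = 0 := by
              have := (hvanish (K0+1) le_rfl).2
              simp only [hu] at this
              exact this
            have h3 : (∑ k ∈ Finset.range (K0+1), cA (γ ^ (d ^ k))) =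
                ∑ k ∈ Finset.range n, cA (γ ^ (d ^ k)) := by
              apply Finset.sum_subset (Finset.range_subset_range.mpr hn)
              intro x hx hnx
              simp only [Finset.mem_range] at hx hnx
              have := (hvanish x (by omega)).1
              simp only [hu] at this
              exact this
            rw [h1, h2, h3]
          refine ⟨K0 + 1, 1, Nat.one_pos, 0, fun n hn => ?_⟩
          rw [hconst (n+1) (by omega), hconst n hn]
          ring
      obtain ⟨K, P, hPpos, Δ, hq'⟩ := hquasi
      have hq2 : ∀ n, K ≤ n → Z (n + P) = Z n + Δ := fun n hn => by
        rw [hZeq, hZeq]; exact hq' n hn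
      obtain ⟨K', hK'⟩ := evp_affine Z hfun (a + b) hbound hmono K P hPpos Δ hq2
      exact ⟨K', P, hPpos, fun n hn => by rw [hgZ, hgZ]; exact hK' n hn⟩
  set R := ((A * B).map (algebraMap ℚ ℂ)).roots.toFinset with hR
  have hAB0 : A * B ≠ 0 := mul_ne_zero hA hB
  have hgle : ∀ n β, mlt β (g n) ≤ mlt β A + mlt β B := by
    intro n β
    have h1 := hmg n β
    have h2 := hMD0 n β
    omega
  have hdeg : ∀ n, (g n).natDegree = ∑ β ∈ R, mlt β (g n) := by
    intro n
    have hg0 : g n ≠ 0 := (facts n).1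
    have hsplits : Splits ((g n).map (algebraMap ℚ ℂ)) := IsAlgClosed.splits _
    rw [← natDegree_map (algebraMap ℚ ℂ), hsplits.natDegree_eq_card_roots, ← Multiset.toFinset_sum_count_eq]
    have hconv : ∀ β ∈ ((g n).map (algebraMap ℚ ℂ)).roots.toFinset,
        Multiset.count β ((g n).map (algebraMap ℚ ℂ)).roots = mlt β (g n) :=
      fun β _ => count_roots _
    rw [Finset.sum_congr rfl hconv]
    apply Finset.sum_subset
    · intro β hβ
      rw [Multiset.mem_toFinset, mem_roots (map_ne' hg0)] at hβ
      have hpos : 0 < mlt β (g n) := by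
        unfold mlt
        rw [rootMultiplicity_pos (map_ne' hg0)]
        exact hβ
      have hle := hgle n β
      have hABm : 0 < mlt β (A * B) := by rw [mlt_mul hA hB]; omega
      rw [hR, Multiset.mem_toFinset, mem_roots (map_ne' hAB0)]
      unfold mlt at hABm
      rw [rootMultiplicity_pos (map_ne' hAB0)] at hABm
      exact hABm
    · intro β hβR hβnot
      apply mlt_eq_zero_of_not_root
      intro hroot
      exact hβnot (Multiset.mem_toFinset.mpr ((mem_roots (map_ne' hg0)).mpr hroot))
  obtain ⟨K, P, hPpos, hsum⟩ := evp_sum R (fun n β => mlt β (g n)) (fun β _ => perbeta β)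
  exact ⟨K, P, hPpos, fun n hn => by rw [hdeg, hdeg]; exact hsum n hn⟩
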